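/- Let D be a positive integer that is the smaller element of a 2-cycle of the iterative digital reversal map (equivalently, rev(D) = 9·D). Then D has at least four decimal digits, its first two decimal digits (most significant first) are 1 and 0, and its last two decimal digits are 8 and 9; i.e., writing D = Σ_{i=0}^n a_i·10^i with a_n ≠ 0, one has n ≥ 3, a_n = 1, a_{n−1} = 0, a_1 = 8 and a_0 = 9. -/

import Mathlib

/-- Digital reversal of a natural number (in base 10). -/
def rev (D : ℕ) : ℕ := Nat.ofDigits 10 ((Nat.digits 10 D).reverse)

lemma digit_eq (i D : ℕ) : (Nat.digits 10 D).getD i 0 = D / 10 ^ i % 10 := by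
  induction i generalizing D with
  | zero =>
    rcases Nat.eq_zero_or_pos D with rfl | hD
    · simp
    · rw [Nat.digits_def' (by norm_num : (1:ℕ) < 10) hD]
      simp
  | succ i ih =>
    rcases Nat.eq_zero_or_pos D with rfl | hD
    · simp
    · rw [Nat.digits_def' (by norm_num : (1:ℕ) < 10) hD]
      simp only [List.getD_cons_succ]
      rw [ih, Nat.div_div_eq_div_mul, pow_succ']

lemma ofDigits_digit_eq (l : List ℕ) (hl : ∀ x ∈ l, x < 10) (i : ℕ) :
    Nat.ofDigits 10 l / 10 ^ i % 10 = l.getD i 0 := by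
  induction l generalizing i with
  | nil => simp [Nat.ofDigits]
  | cons x xs ih =>
    have hx : x < 10 := hl x (by simp)
    cases i with
    | zero =>
      simp only [pow_zero, Nat.div_one, List.getD_cons_zero, Nat.ofDigits_cons]
      omega
    | succ i =>
      have hdiv : Nat.ofDigits 10 (x :: xs) / 10 = Nat.ofDigits 10 xs := by
        rw [Nat.ofDigits_cons, Nat.add_mul_div_left _ _ (by norm_num : (0:ℕ) < 10),
          Nat.div_eq_of_lt hx, Nat.zero_add]
      rw [pow_succ', ← Nat.div_div_eq_div_mul, hdiv, List.getD_cons_succ]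
      exact ih (fun x hx => hl x (by simp [hx])) i

theorem stmt10 (D : ℕ) (hD : 0 < D) (h : rev D = 9 * D) :
    4 ≤ (Nat.digits 10 D).length ∧
    (Nat.digits 10 D).getD ((Nat.digits 10 D).length - 1) 0 = 1 ∧
    (Nat.digits 10 D).getD ((Nat.digits 10 D).length - 2) 0 = 0 ∧
    (Nat.digits 10 D).getD 1 0 = 8 ∧
    (Nat.digits 10 D).getD 0 0 = 9 := by
  set L := Nat.digits 10 D with hL
  have hten : (1:ℕ) < 10 := by norm_num
  have hlt10 : ∀ x ∈ L, x < 10 := fun x hx => Nat.digits_lt_base hten hx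
  have hLne : L ≠ [] := Nat.digits_ne_nil_iff_ne_zero.mpr hD.ne'
  set n1 := L.length with hn1def
  have hn1 : 1 ≤ n1 := List.length_pos_iff.mpr hLne
  -- basic bounds
  have hDlt : D < 10 ^ n1 := Nat.lt_base_pow_length_digits hten
  have hDge : 10 ^ (n1 - 1) ≤ D := by
    have h1 : 10 ^ n1 ≤ 10 * D := Nat.base_pow_length_digits_le 10 D hten hD.ne'
    have h2 : 10 ^ n1 = 10 * 10 ^ (n1 - 1) := by
      rw [← pow_succ']
      congr 1
      omega
    omega
  have hRevlt : rev D < 10 ^ n1 := by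
    have := Nat.ofDigits_lt_base_pow_length (l := L.reverse) hten
      (fun x hx => hlt10 x (List.mem_reverse.mp hx))
    rwa [List.length_reverse] at this
  -- digit of rev D at position i equals digit of D at position n1-1-i
  have hrevdig : ∀ i, i < n1 → rev D / 10 ^ i % 10 = L.getD (n1 - 1 - i) 0 := by
    intro i hi
    have h1 : rev D / 10 ^ i % 10 = L.reverse.getD i 0 :=
      ofDigits_digit_eq L.reverse (fun x hx => hlt10 x (List.mem_reverse.mp hx)) i
    rw [h1, List.getD_eq_getElem _ _ (by simpa using hi), List.getElem_reverse,
      List.getD_eq_getElem _ _ (by omega)]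
  have hdig : ∀ i, L.getD i 0 = D / 10 ^ i % 10 := fun i => digit_eq i D
  set P := 10 ^ (n1 - 1) with hP
  have hPpos : 0 < P := Nat.pow_pos (by norm_num)
  have h10P : 10 ^ n1 = 10 * P := by
    rw [hP, ← pow_succ']; congr 1; omega
  -- rev D / P = 9, hence a0 = 9
  have hrevP : rev D / P = 9 := by
    have h1 : 9 ≤ rev D / P := (Nat.le_div_iff_mul_le hPpos).mpr (by omega)
    have h2 : rev D / P < 10 := (Nat.div_lt_iff_lt_mul hPpos).mpr (by omega)
    omega
  have ha0 : L.getD 0 0 = 9 := by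
    have h0 := hrevdig (n1 - 1) (by omega)
    rw [show n1 - 1 - (n1 - 1) = 0 from by omega] at h0
    rw [← h0]
    show rev D / P % 10 = 9
    rw [hrevP]
  have hmod10 : D % 10 = 9 := by
    have h0 := hdig 0
    simp only [pow_zero, Nat.div_one] at h0
    omega
  have hD2P : D < 2 * P := by omega
  have hDP : D / P = 1 := by
    have h1 : 1 ≤ D / P := (Nat.le_div_iff_mul_le hPpos).mpr (by omega)
    have h2 : D / P < 2 := (Nat.div_lt_iff_lt_mul hPpos).mpr (by omega)
    omega
  have han : L.getD (n1 - 1) 0 = 1 := by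
    rw [hdig]
    show D / P % 10 = 1
    rw [hDP]
  -- exclude one-digit case
  have hn2 : 2 ≤ n1 := by
    by_contra hc
    have hP1 : P = 1 := by rw [hP, show n1 - 1 = 0 from by omega, pow_zero]
    rw [hP1, Nat.div_one] at hDP
    omega
  set Q := 10 ^ (n1 - 2) with hQ
  have hQpos : 0 < Q := Nat.pow_pos (by norm_num)
  have hPQ : P = 10 * Q := by
    rw [hP, hQ, ← pow_succ']; congr 1; omega
  have hDQlo : 10 ≤ D / Q := (Nat.le_div_iff_mul_le hQpos).mpr (by omega)
  have hDQhi : D / Q < 12 := (Nat.div_lt_iff_lt_mul hQpos).mpr (by omega)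
  have ha1'raw : L.getD (n1 - 2) 0 = D / Q % 10 := hdig (n1 - 2)
  have ha1'le : L.getD (n1 - 2) 0 ≤ 1 := by omega
  have hb : L.getD 1 0 = D / 10 % 10 := by
    have := hdig 1; rwa [pow_one] at this
  have hkey : L.getD (n1 - 2) 0 = 9 * D / 10 % 10 := by
    have h1 := hrevdig 1 (by omega)
    rw [pow_one, h, show n1 - 1 - 1 = n1 - 2 from by omega] at h1
    exact h1.symm
  have h91 : 9 * D / 10 = 9 * (D / 10) + 8 := by omega
  have h92 : (9 * (D / 10) + 8) % 10 = (9 * (D / 10 % 10) + 8) % 10 := by omega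
  have hkey' : L.getD (n1 - 2) 0 = (9 * (L.getD 1 0) + 8) % 10 := by
    rw [hkey, h91, h92, ← hb]
  have hblt : L.getD 1 0 < 10 := by rw [hb]; omega
  have hcases : (L.getD 1 0 = 8 ∧ L.getD (n1 - 2) 0 = 0) ∨
      (L.getD 1 0 = 7 ∧ L.getD (n1 - 2) 0 = 1) := by
    clear hkey ha1'raw hb h91 h92
    revert hkey' ha1'le hblt
    generalize L.getD (n1 - 2) 0 = c
    generalize L.getD 1 0 = e
    intro h1 h2 h3
    interval_cases e <;> omega
  have hn4 : 4 ≤ n1 := by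
    by_contra hc
    have : n1 = 2 ∨ n1 = 3 := by omega
    rcases this with h2 | h3
    · rw [show n1 - 2 = 0 from by omega] at ha1'le
      omega
    · rw [show n1 - 2 = 1 from by omega] at hcases
      omega
  rcases hcases with ⟨hb8, ha1'0⟩ | ⟨hb7, ha1'1⟩
  · exact ⟨hn4, han, ha1'0, hb8, ha0⟩
  · exfalso
    have hDQ : D / Q = 11 := by omega
    have hD11 : 11 * Q ≤ D := (Nat.le_div_iff_mul_le hQpos).mp (by omega)
    have hr1 : rev D / Q % 10 = L.getD (n1 - 1 - (n1 - 2)) 0 := hrevdig (n1 - 2) (by omega)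
    rw [show n1 - 1 - (n1 - 2) = 1 from by omega, hb7] at hr1
    have hr2 : rev D / Q / 10 = 9 := by
      rw [Nat.div_div_eq_div_mul, show Q * 10 = P from by omega]
      exact hrevP
    have hr3 : rev D / Q = 97 := by
      have := Nat.div_add_mod (rev D / Q) 10
      omega
    have hr4 : rev D < 98 * Q := (Nat.div_lt_iff_lt_mul hQpos).mp (by omega)
    omega
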